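/- Let a₁, a₂ be positive integers and b₁, b₂ integers with Δ₀ = a₁b₂ − a₂b₁ ≠ 0. Let p be a prime not dividing gcd(a₁,a₂)·Δ₀, let m ≥ 1, and suppose χ is a Dirichlet character mod p^m of order t. If there is a nonzero complex constant c such that χ((a₁n + b₁)·(a₂n + b₂)⁻¹) = c for every residue class n mod p^m with both a₁n + b₁ and a₂n + b₂ coprime to p (the inverse taken in the units mod p^m), then p^m − 2p^{m−1} ≤ t⁻¹·p^{m−1}(p−1); in particular, if p > 3 then t = 1, and if p = 3 then t ≤ 2. -/

import Mathlib

open Finset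

private lemma aux_unit_iff {p m : ℕ} (hp : p.Prime) (hm : 1 ≤ m) (hdvd : p ∣ p ^ m)
    (x : ZMod (p ^ m)) :
    IsUnit x ↔ (ZMod.castHom hdvd (ZMod p)) x ≠ 0 := by
  haveI : NeZero (p ^ m) := ⟨pow_ne_zero m hp.pos.ne'⟩
  have h1 : IsUnit x ↔ Nat.Coprime x.val (p ^ m) := by
    conv_lhs => rw [← ZMod.natCast_zmod_val x]
    exact ZMod.isUnit_iff_coprime _ _
  have h2 : ((x.val : ZMod p)) = ZMod.castHom hdvd (ZMod p) x := by
    rw [ZMod.castHom_apply, ZMod.natCast_val]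
  rw [h1, Nat.coprime_pow_right_iff (by omega), Nat.coprime_comm, hp.coprime_iff_not_dvd,
    ← ZMod.natCast_eq_zero_iff, h2]

private lemma aux_fiber_card {p m : ℕ} [NeZero p] [NeZero (p ^ m)] (hp : p.Prime)
    (hm : 1 ≤ m) (hdvd : p ∣ p ^ m) (y : ZMod p) :
    (Finset.univ.filter fun n : ZMod (p ^ m) =>
      ZMod.castHom hdvd (ZMod p) n = y).card = p ^ (m - 1) := by
  set π := ZMod.castHom hdvd (ZMod p) with hπ
  have key : ∀ y : ZMod p,
      (Finset.univ.filter fun n : ZMod (p ^ m) => π n = y).card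
        = (Finset.univ.filter fun n : ZMod (p ^ m) => π n = 0).card := by
    intro y
    have hc : π ((y.val : ZMod (p ^ m))) = y := by
      rw [map_natCast, ZMod.natCast_zmod_val]
    refine Finset.card_nbij' (fun x => x - (y.val : ZMod (p ^ m)))
      (fun x => x + (y.val : ZMod (p ^ m))) ?_ ?_ ?_ ?_
    · intro a ha
      simp only [mem_coe, mem_filter, mem_univ, true_and] at ha ⊢
      rw [map_sub, ha, hc, sub_self]
    · intro a ha
      simp only [mem_coe, mem_filter, mem_univ, true_and] at ha ⊢
      rw [map_add, ha, hc, zero_add]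
    · intro a _; simp
    · intro a _; simp
  have hsum : (Finset.univ : Finset (ZMod (p ^ m))).card =
      ∑ y : ZMod p, (Finset.univ.filter fun n : ZMod (p ^ m) => π n = y).card :=
    Finset.card_eq_sum_card_fiberwise (fun x _ => Finset.mem_univ (π x))
  have hsum2 : p ^ m = p * (Finset.univ.filter fun n : ZMod (p ^ m) => π n = 0).card := by
    calc p ^ m = (Finset.univ : Finset (ZMod (p ^ m))).card := by
          rw [Finset.card_univ, ZMod.card]
      _ = ∑ y : ZMod p, (Finset.univ.filter fun n : ZMod (p ^ m) => π n = y).card := hsum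
      _ = ∑ _y : ZMod p, (Finset.univ.filter fun n : ZMod (p ^ m) => π n = 0).card :=
          Finset.sum_congr rfl fun y _ => key y
      _ = p * _ := by rw [Finset.sum_const, Finset.card_univ, ZMod.card, smul_eq_mul]
  have hpow : p ^ m = p * p ^ (m - 1) := by
    rw [← pow_succ']
    congr 1
    omega
  have hF0 := Nat.eq_of_mul_eq_mul_left hp.pos (hsum2.symm.trans hpow)
  exact (key y).trans hF0

private lemma aux_order {N : ℕ} [NeZero N] (χ : DirichletCharacter ℂ N) :
    orderOf χ = Nat.card (MulChar.equivToUnitHom χ).range := by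
  set φ := MulChar.equivToUnitHom χ with hφ
  haveI : Finite (φ.range : Subgroup ℂˣ) := by
    have h : (φ.range : Set ℂˣ) = Set.range φ := MonoidHom.coe_range φ
    exact Set.Finite.to_subtype (h ▸ Set.finite_range φ)
  have hpowiff : ∀ n : ℕ, χ ^ n = 1 ↔ φ ^ n = 1 := by
    intro n
    constructor
    · intro h
      ext u
      have h2 : (χ ^ n) ↑u = (1 : DirichletCharacter ℂ N) ↑u := by rw [h]
      rw [MulChar.pow_apply_coe, MulChar.one_apply_coe] at h2
      have : ((φ u : ℂˣ) : ℂ) ^ n = 1 := by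
        rw [hφ, MulChar.coe_equivToUnitHom]; exact h2
      simp only [MonoidHom.pow_apply, MonoidHom.one_apply]
      simpa using this
    · intro h
      ext u
      have h2 : (φ ^ n) u = (1 : (ZMod N)ˣ →* ℂˣ) u := by rw [h]
      simp only [MonoidHom.pow_apply, MonoidHom.one_apply] at h2
      have h3 : ((φ u : ℂˣ) : ℂ) ^ n = 1 := by
        rw [← Units.val_pow_eq_pow_val, h2, Units.val_one]
      rw [hφ, MulChar.coe_equivToUnitHom] at h3
      rw [MulChar.pow_apply_coe, MulChar.one_apply_coe]
      exact h3
  have h1 : orderOf χ = orderOf φ := by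
    apply Nat.dvd_antisymm
    · exact orderOf_dvd_of_pow_eq_one ((hpowiff _).mpr (pow_orderOf_eq_one φ))
    · exact orderOf_dvd_of_pow_eq_one ((hpowiff _).mp (pow_orderOf_eq_one χ))
  have h2 : orderOf φ = Monoid.exponent φ.range := by
    apply Nat.dvd_antisymm
    · apply orderOf_dvd_of_pow_eq_one
      ext u
      have h3 : (⟨φ u, MonoidHom.mem_range.mpr ⟨u, rfl⟩⟩ : φ.range) ^
          Monoid.exponent φ.range = 1 := Monoid.pow_exponent_eq_one _
      have h4 : (φ u) ^ Monoid.exponent φ.range = 1 := by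
        have h5 := congrArg (Subtype.val) h3
        simpa using h5
      simp only [MonoidHom.pow_apply, MonoidHom.one_apply]
      simpa using congrArg Units.val h4
    · apply Monoid.exponent_dvd_of_forall_pow_eq_one
      rintro ⟨-, u, rfl⟩
      ext
      have h4 : φ u ^ orderOf φ = 1 := by
        rw [← MonoidHom.pow_apply, pow_orderOf_eq_one φ, MonoidHom.one_apply]
      simpa using congrArg Units.val h4
  rw [h1, h2, IsCyclic.exponent_eq_card]

/-- If a Dirichlet character mod `p^m` of order `t` is constantly `c ≠ 0` on the ratios
`(a₁n+b₁)/(a₂n+b₂)` over admissible residues `n`, then `p^m - 2p^{m-1} ≤ t⁻¹ p^{m-1}(p-1)`;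
in particular `t = 1` if `p > 3` and `t ≤ 2` if `p = 3`. -/
theorem stmt_3 (a₁ a₂ b₁ b₂ : ℤ) (ha₁ : 0 < a₁) (ha₂ : 0 < a₂)
    (hΔ : a₁ * b₂ - a₂ * b₁ ≠ 0) (p : ℕ) (hp : p.Prime) (m : ℕ) (hm : 1 ≤ m)
    (hpnd : ¬ (p : ℤ) ∣ Int.gcd a₁ a₂ * (a₁ * b₂ - a₂ * b₁))
    (χ : DirichletCharacter ℂ (p ^ m)) (t : ℕ) (ht : t = orderOf χ)
    (c : ℂ) (hc : c ≠ 0)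
    (hval : ∀ n : ZMod (p ^ m),
      IsUnit ((a₁ : ZMod (p ^ m)) * n + (b₁ : ZMod (p ^ m))) →
      IsUnit ((a₂ : ZMod (p ^ m)) * n + (b₂ : ZMod (p ^ m))) →
      χ (((a₁ : ZMod (p ^ m)) * n + (b₁ : ZMod (p ^ m))) *
        ((a₂ : ZMod (p ^ m)) * n + (b₂ : ZMod (p ^ m)))⁻¹) = c) :
    ((p : ℝ) ^ m - 2 * (p : ℝ) ^ (m - 1) ≤ (t : ℝ)⁻¹ * (p : ℝ) ^ (m - 1) * ((p : ℝ) - 1)) ∧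
      (3 < p → t = 1) ∧ (p = 3 → t ≤ 2) := by
  classical
  haveI : NeZero p := ⟨hp.pos.ne'⟩
  haveI : NeZero (p ^ m) := ⟨pow_ne_zero m hp.pos.ne'⟩
  haveI : Fact p.Prime := ⟨hp⟩
  have hdvd : p ∣ p ^ m := dvd_pow_self p (by omega)
  set π := ZMod.castHom hdvd (ZMod p) with hπ
  -- t is positive
  have horder := aux_order χ
  set φ := MulChar.equivToUnitHom χ with hφ
  haveI hfin : Finite (φ.range : Subgroup ℂˣ) := by
    have h : (φ.range : Set ℂˣ) = Set.range φ := MonoidHom.coe_range φ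
    exact Set.Finite.to_subtype (h ▸ Set.finite_range φ)
  have ht1 : 1 ≤ t := by
    rw [ht, horder]
    exact Nat.card_pos
  -- p does not divide Δ
  have hpΔ : ¬ (p : ℤ) ∣ (a₁ * b₂ - a₂ * b₁) := fun h => hpnd (h.mul_left _)
  -- bound on the "bad" sets
  have hbad : ∀ a b : ℤ, ((a : ZMod p) ≠ 0 ∨ (b : ZMod p) ≠ 0) →
      (Finset.univ.filter fun n : ZMod (p ^ m) =>
        ¬ IsUnit ((a : ZMod (p ^ m)) * n + (b : ZMod (p ^ m)))).card ≤ p ^ (m - 1) := by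
    intro a b hab
    by_cases ha : (a : ZMod p) = 0
    · have hb : (b : ZMod p) ≠ 0 := hab.resolve_left (not_not_intro ha)
      have hcard : (Finset.univ.filter fun n : ZMod (p ^ m) =>
          ¬ IsUnit ((a : ZMod (p ^ m)) * n + (b : ZMod (p ^ m)))).card = 0 := by
        rw [Finset.card_eq_zero, Finset.filter_eq_empty_iff]
        intro n _
        rw [not_not, aux_unit_iff hp hm hdvd]
        rw [map_add, map_mul, map_intCast, map_intCast, ha, zero_mul, zero_add]
        exact hb
      omega
    · have hy : ∀ n : ZMod (p ^ m),
          (¬ IsUnit ((a : ZMod (p ^ m)) * n + (b : ZMod (p ^ m)))) ↔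
            π n = -(b : ZMod p) * ((a : ZMod p))⁻¹ := by
        intro n
        rw [aux_unit_iff hp hm hdvd, not_not]
        rw [map_add, map_mul, map_intCast, map_intCast]
        constructor
        · intro h
          have h2 : (a : ZMod p)⁻¹ * ((a : ZMod p) * π n + (b : ZMod p)) = 0 := by
            rw [h, mul_zero]
          rw [mul_add, ← mul_assoc, inv_mul_cancel₀ ha, one_mul] at h2
          linear_combination h2
        · intro h
          rw [h]
          field_simp
          ring
      have heq : (Finset.univ.filter fun n : ZMod (p ^ m) =>
          ¬ IsUnit ((a : ZMod (p ^ m)) * n + (b : ZMod (p ^ m)))) =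
          (Finset.univ.filter fun n : ZMod (p ^ m) =>
            π n = -(b : ZMod p) * ((a : ZMod p))⁻¹) := by
        apply Finset.filter_congr
        intro n _
        exact hy n
      rw [heq]
      exact le_of_eq (aux_fiber_card hp hm hdvd _)
  -- the two conditions are not simultaneously degenerate
  have hb1 : ((a₁ : ZMod p) ≠ 0 ∨ (b₁ : ZMod p) ≠ 0) := by
    by_contra h
    push_neg at h
    obtain ⟨h1, h2⟩ := h
    rw [ZMod.intCast_zmod_eq_zero_iff_dvd] at h1 h2
    exact hpΔ (dvd_sub (h1.mul_right _) (h2.mul_left _))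
  have hb2 : ((a₂ : ZMod p) ≠ 0 ∨ (b₂ : ZMod p) ≠ 0) := by
    by_contra h
    push_neg at h
    obtain ⟨h1, h2⟩ := h
    rw [ZMod.intCast_zmod_eq_zero_iff_dvd] at h1 h2
    exact hpΔ (dvd_sub ((h2.mul_left _)) (h1.mul_right _))
  -- the set of admissible residues
  set A := Finset.univ.filter (fun n : ZMod (p ^ m) =>
    IsUnit ((a₁ : ZMod (p ^ m)) * n + (b₁ : ZMod (p ^ m))) ∧
    IsUnit ((a₂ : ZMod (p ^ m)) * n + (b₂ : ZMod (p ^ m)))) with hA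
  have hAcard : p ^ m ≤ A.card + 2 * p ^ (m - 1) := by
    have hsub : (Finset.univ : Finset (ZMod (p ^ m))) ⊆ A ∪
        ((Finset.univ.filter fun n : ZMod (p ^ m) =>
          ¬ IsUnit ((a₁ : ZMod (p ^ m)) * n + (b₁ : ZMod (p ^ m)))) ∪
        (Finset.univ.filter fun n : ZMod (p ^ m) =>
          ¬ IsUnit ((a₂ : ZMod (p ^ m)) * n + (b₂ : ZMod (p ^ m))))) := by
      intro n _
      simp only [hA, Finset.mem_union, Finset.mem_filter, Finset.mem_univ, true_and]
      tauto
    have hu : (Finset.univ : Finset (ZMod (p ^ m))).card = p ^ m := by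
      rw [Finset.card_univ, ZMod.card]
    have hc1 := Finset.card_le_card hsub
    have hc2 := Finset.card_union_le A
      ((Finset.univ.filter fun n : ZMod (p ^ m) =>
          ¬ IsUnit ((a₁ : ZMod (p ^ m)) * n + (b₁ : ZMod (p ^ m)))) ∪
        (Finset.univ.filter fun n : ZMod (p ^ m) =>
          ¬ IsUnit ((a₂ : ZMod (p ^ m)) * n + (b₂ : ZMod (p ^ m)))))
    have hc3 := Finset.card_union_le
      (Finset.univ.filter fun n : ZMod (p ^ m) =>
          ¬ IsUnit ((a₁ : ZMod (p ^ m)) * n + (b₁ : ZMod (p ^ m))))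
      (Finset.univ.filter fun n : ZMod (p ^ m) =>
          ¬ IsUnit ((a₂ : ZMod (p ^ m)) * n + (b₂ : ZMod (p ^ m))))
    have hc4 := hbad a₁ b₁ hb1
    have hc5 := hbad a₂ b₂ hb2
    omega
  -- the fiber of χ over c, in the unit group
  set T := Finset.univ.filter (fun u : (ZMod (p ^ m))ˣ => χ ↑u = c) with hT
  -- injection from A into T
  have hAT : A.card ≤ T.card := by
    set f : ZMod (p ^ m) → (ZMod (p ^ m))ˣ := fun n =>
      if h : IsUnit ((a₁ : ZMod (p ^ m)) * n + (b₁ : ZMod (p ^ m))) ∧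
          IsUnit ((a₂ : ZMod (p ^ m)) * n + (b₂ : ZMod (p ^ m)))
        then h.1.unit * (h.2.unit)⁻¹ else 1 with hf
    have hfval : ∀ n (h : IsUnit ((a₁ : ZMod (p ^ m)) * n + (b₁ : ZMod (p ^ m))) ∧
        IsUnit ((a₂ : ZMod (p ^ m)) * n + (b₂ : ZMod (p ^ m)))),
        (f n : ZMod (p ^ m)) = ((a₁ : ZMod (p ^ m)) * n + (b₁ : ZMod (p ^ m))) *
          ((a₂ : ZMod (p ^ m)) * n + (b₂ : ZMod (p ^ m)))⁻¹ := by
      intro n h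
      rw [hf]
      simp only [dif_pos h, Units.val_mul]
      rw [← ZMod.inv_coe_unit, h.1.unit_spec, h.2.unit_spec]
    apply Finset.card_le_card_of_injOn f
    · intro n hn
      rw [hA, Finset.mem_coe, Finset.mem_filter] at hn
      obtain ⟨-, h⟩ := hn
      rw [hT, Finset.mem_coe, Finset.mem_filter]
      refine ⟨Finset.mem_univ _, ?_⟩
      rw [hfval n h]
      exact hval n h.1 h.2
    · intro n hn n' hn' hfe
      rw [hA, Finset.coe_filter] at hn hn'
      obtain ⟨-, h⟩ := hn
      obtain ⟨-, h'⟩ := hn'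
      have e1 := congrArg (Units.val) hfe
      rw [hfval n h, hfval n' h'] at e1
      have hy1 := ZMod.mul_inv_of_unit _ h.2
      have hy2 := ZMod.mul_inv_of_unit _ h'.2
      have e2 : ((a₁ : ZMod (p ^ m)) * n + (b₁ : ZMod (p ^ m))) *
            ((a₂ : ZMod (p ^ m)) * n' + (b₂ : ZMod (p ^ m))) =
          ((a₁ : ZMod (p ^ m)) * n' + (b₁ : ZMod (p ^ m))) *
            ((a₂ : ZMod (p ^ m)) * n + (b₂ : ZMod (p ^ m))) := by
        linear_combination (((a₂ : ZMod (p ^ m)) * n + (b₂ : ZMod (p ^ m))) *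
            ((a₂ : ZMod (p ^ m)) * n' + (b₂ : ZMod (p ^ m)))) * e1 -
          (((a₁ : ZMod (p ^ m)) * n + (b₁ : ZMod (p ^ m))) *
            ((a₂ : ZMod (p ^ m)) * n' + (b₂ : ZMod (p ^ m)))) * hy1 +
          (((a₁ : ZMod (p ^ m)) * n' + (b₁ : ZMod (p ^ m))) *
            ((a₂ : ZMod (p ^ m)) * n + (b₂ : ZMod (p ^ m)))) * hy2
      have e3 : ((a₁ * b₂ - a₂ * b₁ : ℤ) : ZMod (p ^ m)) * (n - n') = 0 := by
        push_cast
        linear_combination e2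
      have hΔu : IsUnit ((a₁ * b₂ - a₂ * b₁ : ℤ) : ZMod (p ^ m)) := by
        rw [aux_unit_iff hp hm hdvd, map_intCast, Ne, ZMod.intCast_zmod_eq_zero_iff_dvd]
        exact hpΔ
      have e4 : n - n' = 0 := hΔu.mul_left_cancel (by rw [mul_zero]; exact e3)
      exact sub_eq_zero.mp e4
  -- the fiber bound:  |T| * t ≤ p^(m-1) * (p-1)
  have hTt : T.card * t ≤ p ^ (m - 1) * (p - 1) := by
    have hcardG : Nat.card (ZMod (p ^ m))ˣ = p ^ (m - 1) * (p - 1) := by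
      rw [Nat.card_eq_fintype_card, ZMod.card_units_eq_totient,
        Nat.totient_prime_pow hp (by omega)]
    rcases Finset.eq_empty_or_nonempty T with hTe | ⟨u₀, hu₀⟩
    · simp [hTe]
    · have hu₀' : χ ↑u₀ = c := (Finset.mem_filter.mp hu₀).2
      have hker : ∀ u : (ZMod (p ^ m))ˣ, u ∈ T → u₀⁻¹ * u ∈ φ.ker := by
        intro u hu
        have hu' : χ ↑u = c := (Finset.mem_filter.mp hu).2
        rw [MonoidHom.mem_ker, map_mul, map_inv]
        have heq : φ u = φ u₀ := by
          apply Units.ext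
          rw [hφ, MulChar.coe_equivToUnitHom, MulChar.coe_equivToUnitHom, hu', hu₀']
        rw [heq, inv_mul_cancel]
      have hinjT : T.card ≤ Nat.card φ.ker := by
        rw [← Nat.card_eq_finsetCard]
        exact Nat.card_le_card_of_injective
          (fun u : T => (⟨u₀⁻¹ * (u : (ZMod (p ^ m))ˣ), hker u u.2⟩ : φ.ker))
          (fun u v huv => by
            apply Subtype.ext
            have h2 := congrArg Subtype.val huv
            simpa using mul_left_cancel h2)
      have hGq : Nat.card (ZMod (p ^ m))ˣ = Nat.card φ.range * Nat.card φ.ker := by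
        rw [Subgroup.card_eq_card_quotient_mul_card_subgroup φ.ker]
        congr 1
        exact Nat.card_congr (QuotientGroup.quotientKerEquivRange φ).toEquiv
      calc T.card * t ≤ Nat.card φ.ker * Nat.card φ.range :=
            Nat.mul_le_mul hinjT (by rw [ht, horder])
        _ = Nat.card (ZMod (p ^ m))ˣ := by rw [hGq, Nat.mul_comm]
        _ = p ^ (m - 1) * (p - 1) := hcardG
  -- final real arithmetic
  have hp1 : (1 : ℝ) < p := by exact_mod_cast hp.one_lt
  have hK : (0 : ℝ) < (p : ℝ) ^ (m - 1) := by positivity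
  have ht0 : (0 : ℝ) < t := by exact_mod_cast ht1
  have hr1 : (p : ℝ) ^ m ≤ (A.card : ℝ) + 2 * (p : ℝ) ^ (m - 1) := by exact_mod_cast hAcard
  have hr2 : (A.card : ℝ) ≤ T.card := by exact_mod_cast hAT
  have hr3 : (T.card : ℝ) * t ≤ (p : ℝ) ^ (m - 1) * ((p : ℝ) - 1) := by
    have := hTt
    have hcast : ((p - 1 : ℕ) : ℝ) = (p : ℝ) - 1 := by
      rw [Nat.cast_sub hp.one_le, Nat.cast_one]
    calc ((T.card : ℝ)) * t = ((T.card * t : ℕ) : ℝ) := by push_cast; ring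
      _ ≤ ((p ^ (m - 1) * (p - 1) : ℕ) : ℝ) := by exact_mod_cast this
      _ = (p : ℝ) ^ (m - 1) * ((p : ℝ) - 1) := by push_cast [hcast]; ring
  have main : (p : ℝ) ^ m - 2 * (p : ℝ) ^ (m - 1) ≤
      (t : ℝ)⁻¹ * (p : ℝ) ^ (m - 1) * ((p : ℝ) - 1) := by
    rw [show (t : ℝ)⁻¹ * (p : ℝ) ^ (m - 1) * ((p : ℝ) - 1) =
      ((p : ℝ) ^ (m - 1) * ((p : ℝ) - 1)) / t by ring]
    rw [le_div_iff₀ ht0]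
    have h5 : (p : ℝ) ^ m - 2 * (p : ℝ) ^ (m - 1) ≤ (T.card : ℝ) := by linarith
    nlinarith [mul_le_mul_of_nonneg_right h5 ht0.le]
  have hpm : (p : ℝ) ^ m = (p : ℝ) ^ (m - 1) * p := by
    rw [← pow_succ]
    congr 1
    omega
  refine ⟨main, ?_, ?_⟩
  · intro hp3
    by_contra hne
    have ht2 : 2 ≤ t := by omega
    have ht2r : (2 : ℝ) ≤ t := by exact_mod_cast ht2
    have hinv : (t : ℝ)⁻¹ ≤ 2⁻¹ := inv_anti₀ (by norm_num) ht2r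
    have hp4 : (4 : ℝ) ≤ p := by exact_mod_cast (by omega : 4 ≤ p)
    have h6 : (t : ℝ)⁻¹ * ((p : ℝ) ^ (m - 1) * ((p : ℝ) - 1)) ≤
        2⁻¹ * ((p : ℝ) ^ (m - 1) * ((p : ℝ) - 1)) :=
      mul_le_mul_of_nonneg_right hinv (mul_nonneg hK.le (by linarith))
    have h7 : (p : ℝ) ^ (m - 1) * 4 ≤ (p : ℝ) ^ (m - 1) * (p : ℝ) :=
      mul_le_mul_of_nonneg_left hp4 hK.le
    nlinarith [main, hpm, h6, h7, hK]
  · intro hp3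
    by_contra hne
    have ht3 : 3 ≤ t := by omega
    have ht3r : (3 : ℝ) ≤ t := by exact_mod_cast ht3
    have hinv : (t : ℝ)⁻¹ ≤ 3⁻¹ := inv_anti₀ (by norm_num) ht3r
    have hpr : (p : ℝ) = 3 := by rw [hp3]; norm_num
    have h6 : (t : ℝ)⁻¹ * ((p : ℝ) ^ (m - 1) * ((p : ℝ) - 1)) ≤
        3⁻¹ * ((p : ℝ) ^ (m - 1) * ((p : ℝ) - 1)) :=
      mul_le_mul_of_nonneg_right hinv (mul_nonneg hK.le (by linarith))
    rw [hpr] at main hpm h6 hK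
    linarith [main, hpm, h6, hK]
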